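/- Two-variable symmetry: for positive integers w1, w2, any y ∈ R and n ≥ 0: w1 · Σ_{k=0}^n C(n,k) · B_{k,q^{w2}}(w1·y) · S_{n−k,q^{w1}}(w2 − 1) · w1^{n−k} · w2^k = w2 · Σ_{k=0}^n C(n,k) · B_{k,q^{w1}}(w2·y) · S_{n−k,q^{w2}}(w1 − 1) · w2^{n−k} · w1^k. -/

import Mathlib

open Finset

/-- The q-analogue of power sums: `S_{k,q}(m) = Σ_{i=0}^m i^k q^i` (with `0^0 = 1`). -/
def qS {R : Type*} [CommRing R] (q : R) (k m : ℕ) : R :=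
  ∑ i ∈ Finset.range (m + 1), (i : R) ^ k * q ^ i

/-- q-Bernoulli numbers `b_n(q, L)`: `(q-1) b_0 = L` and for `n ≥ 1`,
`(q-1) b_n = [n = 1] - q Σ_{k<n} C(n,k) b_k`. -/
noncomputable def qb {R : Type*} [CommRing R] (q L : R) : ℕ → R
  | 0 => Ring.inverse (q - 1) * L
  | n + 1 =>
      Ring.inverse (q - 1) *
        ((if n + 1 = 1 then (1 : R) else 0) -
          q * ∑ k ∈ (Finset.range (n + 1)).attach,
              ((n + 1).choose k.1 : R) * qb q L k.1)
  termination_by n => n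
  decreasing_by exact Finset.mem_range.mp k.2

/-- q-Bernoulli polynomials `B_{n,q}(x) = Σ_{k=0}^n C(n,k) b_k(q,L) x^{n-k}`. -/
noncomputable def qB {R : Type*} [CommRing R] (q L : R) (n : ℕ) (x : R) : R :=
  ∑ k ∈ Finset.range (n + 1), (n.choose k : R) * qb q L k * x ^ (n - k)

section
variable {R : Type*} [CommRing R]

lemma qb_rec (q L : R) (hq : IsUnit (q - 1)) (m : ℕ) :
    q * ∑ k ∈ Finset.range (m + 1), (m.choose k : R) * qb q L k - qb q L m
      = (if m = 1 then (1 : R) else 0) + (if m = 0 then L else 0) := by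
  cases m with
  | zero =>
      have h : (q - 1) * qb q L 0 = L := by
        rw [qb, ← mul_assoc, Ring.mul_inverse_cancel _ hq, one_mul]
      norm_num
      linear_combination h
  | succ n =>
      have hunfold : qb q L (n + 1) =
          Ring.inverse (q - 1) *
            ((if n + 1 = 1 then (1 : R) else 0) -
              q * ∑ k ∈ Finset.range (n + 1), ((n + 1).choose k : R) * qb q L k) := by
        rw [qb]
        congr 2
        rw [Finset.sum_attach (Finset.range (n + 1)) (fun k => ((n + 1).choose k : R) * qb q L k)]
      have key : (q - 1) * qb q L (n + 1) =
          (if n + 1 = 1 then (1 : R) else 0) -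
            q * ∑ k ∈ Finset.range (n + 1), ((n + 1).choose k : R) * qb q L k := by
        rw [hunfold, ← mul_assoc, Ring.mul_inverse_cancel _ hq, one_mul]
      rw [Finset.sum_range_succ, Nat.choose_self, Nat.cast_one, one_mul,
        if_neg (Nat.succ_ne_zero n), add_zero]
      linear_combination key

lemma qb_unique (q L : R) (hq : IsUnit (q - 1)) (c : ℕ → R) (W : R)
    (hc : ∀ m, q * ∑ k ∈ Finset.range (m + 1), (m.choose k : R) * c k - c m
      = W * ((if m = 1 then (1 : R) else 0) + (if m = 0 then L else 0))) :
    ∀ m, c m = W * qb q L m := by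
  intro m
  induction m using Nat.strong_induction_on with
  | _ m ih =>
    have h1 := hc m
    have h2 := qb_rec q L hq m
    rw [Finset.sum_range_succ, Nat.choose_self, Nat.cast_one, one_mul] at h1 h2
    have hs : ∑ k ∈ Finset.range m, (m.choose k : R) * c k
        = W * ∑ k ∈ Finset.range m, (m.choose k : R) * qb q L k := by
      rw [Finset.mul_sum]
      refine Finset.sum_congr rfl fun k hk => ?_
      rw [ih k (Finset.mem_range.mp hk)]; ring
    have : (q - 1) * c m = (q - 1) * (W * qb q L m) := by
      linear_combination h1 - W * h2 - q * hs
    exact hq.mul_left_cancel this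

lemma collapse' (g : ℕ → R) (c u v : R) (n : ℕ) :
    ∑ k ∈ Finset.range (n + 1), (n.choose k : R) *
        (∑ r ∈ Finset.range (k + 1), (k.choose r : R) * g r * u ^ (k - r)) * v ^ (n - k) * c ^ k
      = ∑ r ∈ Finset.range (n + 1), (n.choose r : R) * (g r * c ^ r) * (c * u + v) ^ (n - r) := by
  have step1 : ∀ k ∈ Finset.range (n + 1),
      (n.choose k : R) * (∑ r ∈ Finset.range (k + 1), (k.choose r : R) * g r * u ^ (k - r)) *
        v ^ (n - k) * c ^ k
      = ∑ r ∈ Finset.range (n + 1),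
          (n.choose k : R) * ((k.choose r : R) * g r * u ^ (k - r)) * v ^ (n - k) * c ^ k := by
    intro k hk
    rw [Finset.mul_sum, Finset.sum_mul, Finset.sum_mul]
    apply Finset.sum_subset
    · exact Finset.range_subset_range.mpr (Nat.succ_le_of_lt (Finset.mem_range.mp hk))
    · intro r _ hr
      have hkr : k < r := by
        by_contra h
        exact hr (Finset.mem_range.mpr (Nat.lt_succ_of_le (Nat.le_of_not_lt h)))
      rw [Nat.choose_eq_zero_of_lt hkr]
      push_cast
      ring
  rw [Finset.sum_congr rfl step1, Finset.sum_comm]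
  refine Finset.sum_congr rfl fun r hr => ?_
  have hrn : r ≤ n := Nat.lt_succ_iff.mp (Finset.mem_range.mp hr)
  -- shrink k-sum to Ico r (n+1)
  have shrink : ∑ k ∈ Finset.range (n + 1),
      (n.choose k : R) * ((k.choose r : R) * g r * u ^ (k - r)) * v ^ (n - k) * c ^ k
      = ∑ k ∈ Finset.Ico r (n + 1),
      (n.choose k : R) * ((k.choose r : R) * g r * u ^ (k - r)) * v ^ (n - k) * c ^ k := by
    rw [Finset.range_eq_Ico]
    refine (Finset.sum_subset (Finset.Ico_subset_Ico (Nat.zero_le r) le_rfl)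
      fun k hk hk' => ?_).symm
    have : k < r := by
      simp only [Finset.mem_Ico] at hk hk'
      omega
    rw [Nat.choose_eq_zero_of_lt this]
    push_cast
    ring
  rw [shrink, Finset.sum_Ico_eq_sum_range]
  have hsub : n + 1 - r = (n - r) + 1 := by omega
  rw [hsub]
  have step2 : ∀ s ∈ Finset.range ((n - r) + 1),
      (n.choose (r + s) : R) * (((r + s).choose r : R) * g r * u ^ (r + s - r)) *
        v ^ (n - (r + s)) * c ^ (r + s)
      = (n.choose r : R) * (g r * c ^ r) * (((n - r).choose s : R) * (c * u) ^ s * v ^ ((n - r) - s)) := by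
    intro s hs
    have hsnr : s ≤ n - r := Nat.lt_succ_iff.mp (Finset.mem_range.mp hs)
    have h1 : (n.choose (r + s)) * ((r + s).choose r) = n.choose r * (n - r).choose s := by
      rw [Nat.choose_mul (by omega : r ≤ r + s),
        Nat.add_sub_cancel_left]
    have h2 : r + s - r = s := by omega
    have h3 : n - (r + s) = (n - r) - s := by omega
    rw [h2, h3, pow_add, mul_pow]
    have := congrArg (fun x : ℕ => (x : R)) h1
    push_cast at this
    linear_combination (g r * u ^ s * v ^ (n - r - s) * c ^ r * c ^ s) * this
  rw [Finset.sum_congr rfl step2, ← Finset.mul_sum]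
  congr 1
  rw [add_pow]
  refine Finset.sum_congr rfl fun s hs => ?_
  ring

lemma qb_dist (q L : R) (w : ℕ) (hw : 0 < w) (hq1 : IsUnit (q - 1))
    (hqw : IsUnit (q ^ w - 1)) (m : ℕ) :
    (w : R) * qb q L m
      = ∑ i ∈ Finset.range w, q ^ i *
          ∑ r ∈ Finset.range (m + 1), (m.choose r : R) *
            qb (q ^ w) ((w : R) * L) r * (w : R) ^ r * (i : R) ^ (m - r) := by
  set b' : ℕ → R := qb (q ^ w) ((w : R) * L) with hb'
  set g : ℕ → R := fun r => b' r * (w : R) ^ r with hg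
  set Pk : ℕ → R → R := fun k x => ∑ r ∈ Finset.range (k + 1),
      (k.choose r : R) * g r * x ^ (k - r) with hPk
  set c : ℕ → R := fun k => ∑ i ∈ Finset.range w, q ^ i * Pk k (i : R) with hcdef
  have hcform : ∀ k, (∑ i ∈ Finset.range w, q ^ i *
      ∑ r ∈ Finset.range (k + 1), (k.choose r : R) *
        b' r * (w : R) ^ r * (i : R) ^ (k - r)) = c k := by
    intro k
    refine Finset.sum_congr rfl fun i _ => ?_
    simp only [hcdef, hPk, hg]
    congr 1
    exact Finset.sum_congr rfl fun r _ => by ring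
  rw [hcform m]
  suffices h : ∀ m, c m = (w : R) * qb q L m by exact (h m).symm
  apply qb_unique q L hq1 c (w : R)
  intro m
  set F : ℕ → R := fun i => q ^ i * Pk m (i : R) with hF
  have key1 : ∑ k ∈ Finset.range (m + 1), (m.choose k : R) * c k
      = ∑ i ∈ Finset.range w, q ^ i * Pk m ((i : R) + 1) := by
    calc ∑ k ∈ Finset.range (m + 1), (m.choose k : R) * c k
        = ∑ k ∈ Finset.range (m + 1), ∑ i ∈ Finset.range w,
            q ^ i * ((m.choose k : R) * Pk k (i : R) * 1 ^ (m - k) * 1 ^ k) := by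
          refine Finset.sum_congr rfl fun k _ => ?_
          rw [hcdef, Finset.mul_sum]
          exact Finset.sum_congr rfl fun i _ => by ring
      _ = ∑ i ∈ Finset.range w, ∑ k ∈ Finset.range (m + 1),
            q ^ i * ((m.choose k : R) * Pk k (i : R) * 1 ^ (m - k) * 1 ^ k) := by
          rw [Finset.sum_comm]
      _ = ∑ i ∈ Finset.range w, q ^ i * Pk m ((i : R) + 1) := by
          refine Finset.sum_congr rfl fun i _ => ?_
          rw [← Finset.mul_sum]
          congr 1
          have hcoll := collapse' g 1 (i : R) 1 m
          simp only [hPk]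
          rw [hcoll]
          refine Finset.sum_congr rfl fun r _ => ?_
          simp
  have tele : q * ∑ k ∈ Finset.range (m + 1), (m.choose k : R) * c k - c m
      = F w - F 0 := by
    rw [key1, ← Finset.sum_range_sub F w]
    simp only [hcdef]
    rw [Finset.mul_sum, ← Finset.sum_sub_distrib]
    refine Finset.sum_congr rfl fun i _ => ?_
    simp only [hF]
    push_cast
    ring
  have hPw : Pk m (w : R) = (w : R) ^ m * ∑ r ∈ Finset.range (m + 1), (m.choose r : R) * b' r := by
    rw [hPk, Finset.mul_sum]
    refine Finset.sum_congr rfl fun r hr => ?_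
    have hw' : (w : R) ^ r * (w : R) ^ (m - r) = (w : R) ^ m := by
      rw [← pow_add]
      congr 1
      exact Nat.add_sub_cancel' (Nat.lt_succ_iff.mp (Finset.mem_range.mp hr))
    simp only [hg]
    linear_combination ((m.choose r : R) * b' r) * hw'
  have hP0 : Pk m (0 : R) = b' m * (w : R) ^ m := by
    simp only [hPk]
    rw [Finset.sum_eq_single m]
    · simp [hg]
    · intro r hr hne
      have hmr : m - r ≠ 0 := by
        have := Finset.mem_range.mp hr
        omega
      rw [zero_pow hmr]
      ring
    · intro h
      exact absurd (Finset.self_mem_range_succ m) h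
  have hrec := qb_rec (q ^ w) ((w : R) * L) hqw m
  rw [tele]
  have hF0 : F 0 = b' m * (w : R) ^ m := by
    simp only [hF, pow_zero, one_mul, Nat.cast_zero]
    exact hP0
  have hFw : F w = q ^ w * ((w : R) ^ m *
      ∑ r ∈ Finset.range (m + 1), (m.choose r : R) * b' r) := by
    simp only [hF]
    rw [hPw]
  rw [hF0, hFw]
  have key2 : q ^ w * ((w : R) ^ m * ∑ r ∈ Finset.range (m + 1), (m.choose r : R) * b' r)
      - b' m * (w : R) ^ m
      = (w : R) ^ m * ((if m = 1 then (1 : R) else 0) + if m = 0 then (w : R) * L else 0) := by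
    linear_combination ((w : R) ^ m) * hrec
  rw [key2]
  rcases m with _ | _ | m
  · norm_num
  · norm_num
  · norm_num
lemma side (q L : R) (hq : ∀ w : ℕ, 0 < w → IsUnit (q ^ w - 1)) (a b : ℕ)
    (ha : 0 < a) (hb : 0 < b) (y : R) (n : ℕ) :
    (a : R) * ∑ k ∈ Finset.range (n + 1), (n.choose k : R) *
        qB (q ^ b) ((b : R) * L) k ((a : R) * y) * qS (q ^ a) (n - k) (b - 1) *
        (a : R) ^ (n - k) * (b : R) ^ k
      = ∑ j ∈ Finset.range b, ∑ i ∈ Finset.range a,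
          q ^ (a * j + b * i) *
          ∑ s ∈ Finset.range (n + 1), (n.choose s : R) *
            qb (q ^ (b * a)) ((a : R) * ((b : R) * L)) s * ((a : R) * (b : R)) ^ s *
            ((b : R) * ((a : R) * y) + (a : R) * (j : R) + (b : R) * (i : R)) ^ (n - s) := by
  have hu1 : IsUnit (q ^ b - 1) := hq b hb
  have hu2 : IsUnit ((q ^ b) ^ a - 1) := by
    rw [← pow_mul]
    exact hq (b * a) (Nat.mul_pos hb ha)
  set B2 : ℕ → R := qb (q ^ b) ((b : R) * L) with hB2
  set QQ : ℕ → R := qb ((q ^ b) ^ a) ((a : R) * ((b : R) * L)) with hQQ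
  set V : ℕ → R := fun j => (b : R) * ((a : R) * y) + (a : R) * (j : R) with hV
  have hb1 : b - 1 + 1 = b := Nat.succ_pred_eq_of_pos hb
  calc (a : R) * ∑ k ∈ Finset.range (n + 1), (n.choose k : R) *
        qB (q ^ b) ((b : R) * L) k ((a : R) * y) * qS (q ^ a) (n - k) (b - 1) *
        (a : R) ^ (n - k) * (b : R) ^ k
      = (a : R) * ∑ k ∈ Finset.range (n + 1), ∑ j ∈ Finset.range b,
          q ^ (a * j) * ((n.choose k : R) * qB (q ^ b) ((b : R) * L) k ((a : R) * y) *
            ((a : R) * (j : R)) ^ (n - k) * (b : R) ^ k) := by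
        congr 1
        refine Finset.sum_congr rfl fun k _ => ?_
        rw [qS, hb1, Finset.mul_sum, Finset.sum_mul, Finset.sum_mul]
        refine Finset.sum_congr rfl fun j _ => ?_
        rw [← pow_mul, mul_pow]
        ring
    _ = ∑ j ∈ Finset.range b, q ^ (a * j) *
          ((a : R) * ∑ k ∈ Finset.range (n + 1), (n.choose k : R) *
            qB (q ^ b) ((b : R) * L) k ((a : R) * y) *
            ((a : R) * (j : R)) ^ (n - k) * (b : R) ^ k) := by
        rw [Finset.sum_comm, Finset.mul_sum]
        refine Finset.sum_congr rfl fun j _ => ?_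
        rw [Finset.mul_sum, Finset.mul_sum, Finset.mul_sum]
        refine Finset.sum_congr rfl fun k _ => ?_
        ring
    _ = ∑ j ∈ Finset.range b, q ^ (a * j) *
          ((a : R) * ∑ r ∈ Finset.range (n + 1), (n.choose r : R) *
            (B2 r * (b : R) ^ r) * ((b : R) * ((a : R) * y) + (a : R) * (j : R)) ^ (n - r)) := by
        refine Finset.sum_congr rfl fun j _ => ?_
        congr 2
        rw [← collapse' B2 (b : R) ((a : R) * y) ((a : R) * (j : R)) n]
        refine Finset.sum_congr rfl fun k _ => ?_
        rw [qB]
    _ = ∑ j ∈ Finset.range b, q ^ (a * j) *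
          ∑ r ∈ Finset.range (n + 1), (n.choose r : R) *
            ((a : R) * B2 r) * (b : R) ^ r * (V j) ^ (n - r) := by
        refine Finset.sum_congr rfl fun j _ => ?_
        congr 1
        rw [Finset.mul_sum]
        refine Finset.sum_congr rfl fun r _ => ?_
        ring
    _ = ∑ j ∈ Finset.range b, q ^ (a * j) *
          ∑ r ∈ Finset.range (n + 1), ∑ i ∈ Finset.range a, q ^ (b * i) *
            ((n.choose r : R) * (∑ s ∈ Finset.range (r + 1),
              (r.choose s : R) * (QQ s * (a : R) ^ s) * (i : R) ^ (r - s)) *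
              (V j) ^ (n - r) * (b : R) ^ r) := by
        refine Finset.sum_congr rfl fun j _ => ?_
        congr 1
        refine Finset.sum_congr rfl fun r _ => ?_
        rw [hB2, qb_dist (q ^ b) ((b : R) * L) a ha hu1 hu2 r]
        rw [Finset.mul_sum, Finset.sum_mul, Finset.sum_mul]
        refine Finset.sum_congr rfl fun i _ => ?_
        have hS : ∑ s ∈ Finset.range (r + 1), (r.choose s : R) *
              qb ((q ^ b) ^ a) ((a : R) * ((b : R) * L)) s * (a : R) ^ s * (i : R) ^ (r - s)
            = ∑ s ∈ Finset.range (r + 1), (r.choose s : R) * (QQ s * (a : R) ^ s) *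
              (i : R) ^ (r - s) :=
          Finset.sum_congr rfl fun s _ => by rw [hQQ]; ring
        rw [hS, ← pow_mul]
        ring
    _ = ∑ j ∈ Finset.range b, ∑ i ∈ Finset.range a,
          q ^ (a * j) * q ^ (b * i) *
          ∑ r ∈ Finset.range (n + 1), (n.choose r : R) *
            (∑ s ∈ Finset.range (r + 1),
              (r.choose s : R) * (QQ s * (a : R) ^ s) * (i : R) ^ (r - s)) *
            (V j) ^ (n - r) * (b : R) ^ r := by
        refine Finset.sum_congr rfl fun j _ => ?_
        rw [Finset.sum_comm, Finset.mul_sum]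
        refine Finset.sum_congr rfl fun i _ => ?_
        rw [Finset.mul_sum, Finset.mul_sum]
        refine Finset.sum_congr rfl fun r _ => ?_
        ring
    _ = ∑ j ∈ Finset.range b, ∑ i ∈ Finset.range a,
          q ^ (a * j + b * i) *
          ∑ s ∈ Finset.range (n + 1), (n.choose s : R) *
            qb (q ^ (b * a)) ((a : R) * ((b : R) * L)) s * ((a : R) * (b : R)) ^ s *
            ((b : R) * ((a : R) * y) + (a : R) * (j : R) + (b : R) * (i : R)) ^ (n - s) := by
        refine Finset.sum_congr rfl fun j _ => Finset.sum_congr rfl fun i _ => ?_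
        rw [collapse' (fun s => QQ s * (a : R) ^ s) (b : R) (i : R) (V j) n, pow_add]
        congr 1
        refine Finset.sum_congr rfl fun s _ => ?_
        have hcast : QQ s = qb (q ^ (b * a)) ((a : R) * ((b : R) * L)) s := by
          rw [hQQ, ← pow_mul]
        rw [hcast, hV, mul_pow]
        ring
end

theorem symm_two_var {R : Type*} [CommRing R] [Algebra ℚ R] (q L : R)
    (hq : ∀ w : ℕ, 0 < w → IsUnit (q ^ w - 1)) (w1 w2 : ℕ) (hw1 : 0 < w1) (hw2 : 0 < w2) (y : R) (n : ℕ) :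
    (w1 : R) * ∑ k ∈ Finset.range (n + 1), (n.choose k : R) *
        qB (q ^ w2) ((w2 : R) * L) k ((w1 : R) * y) * qS (q ^ w1) (n - k) (w2 - 1) *
        (w1 : R) ^ (n - k) * (w2 : R) ^ k
      = (w2 : R) * ∑ k ∈ Finset.range (n + 1), (n.choose k : R) *
          qB (q ^ w1) ((w1 : R) * L) k ((w2 : R) * y) * qS (q ^ w2) (n - k) (w1 - 1) *
          (w2 : R) ^ (n - k) * (w1 : R) ^ k := by
  rw [side q L hq w1 w2 hw1 hw2 y n, side q L hq w2 w1 hw2 hw1 y n, Finset.sum_comm]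
  refine Finset.sum_congr rfl fun i _ => Finset.sum_congr rfl fun j _ => ?_
  have e1 : w1 * j + w2 * i = w2 * i + w1 * j := Nat.add_comm _ _
  have e2 : w2 * w1 = w1 * w2 := Nat.mul_comm _ _
  have e3 : (w1 : R) * ((w2 : R) * L) = (w2 : R) * ((w1 : R) * L) := by ring
  rw [e1, e2, e3]
  congr 1
  refine Finset.sum_congr rfl fun s _ => ?_
  ring
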